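/- Suppose a nonnegative sequence S_k satisfies S_{k+1} ≤ (1 - μ'βk)S_k + c·βk² where βk = β/(k+K), μ' ∈ (0,1], β ≥ 2/μ', μ'βk ≤ 1, and c ≥ 0. Then S_k ≤ S_0·K/(k+K) + (2c/μ')·β/(k+K) for all k ≥ 0. -/

import Mathlib

lemma key_step (a β K μ' c S0 : ℝ) (ha : 0 < a) (hK : 0 < K)
    (hμ'0 : 0 < μ') (hc : 0 ≤ c) (hS0 : 0 ≤ S0) (hβ : 0 < β)
    (h2 : 2 ≤ μ' * β) :
    (1 - μ' * (β / a)) * (S0 * (K / a) + (2 * c / μ') * (β / a)) + c * (β / a) ^ 2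
      ≤ S0 * (K / (a + 1)) + (2 * c / μ') * (β / (a + 1)) := by
  have ha1 : 0 < a + 1 := by linarith
  have t1 : (1 - μ' * (β / a)) * (S0 * (K / a)) ≤ S0 * (K / (a + 1)) := by
    have h : (1 - μ' * (β / a)) * (K / a) ≤ K / (a + 1) := by
      rw [show (1 - μ' * (β / a)) * (K / a) = ((a - μ' * β) * K) / a ^ 2 from by
        field_simp, div_le_div_iff₀ (by positivity) ha1]
      nlinarith [mul_pos ha hK, hK.le, ha.le]
    calc (1 - μ' * (β / a)) * (S0 * (K / a)) = S0 * ((1 - μ' * (β / a)) * (K / a)) := by ring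
      _ ≤ S0 * (K / (a + 1)) := mul_le_mul_of_nonneg_left h hS0
  have t2 : (1 - μ' * (β / a)) * ((2 * c / μ') * (β / a)) + c * (β / a) ^ 2
      ≤ (2 * c / μ') * (β / (a + 1)) := by
    have hx : 0 ≤ (μ' * β - 2) * a + μ' * β := by nlinarith
    rw [show (1 - μ' * (β / a)) * ((2 * c / μ') * (β / a)) + c * (β / a) ^ 2
        = (c * β * (2 * a - μ' * β)) / (μ' * a ^ 2) from by field_simp; ring,
      show (2 * c / μ') * (β / (a + 1)) = (2 * c * β) / (μ' * (a + 1)) from by field_simp,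
      div_le_div_iff₀ (by positivity) (by positivity)]
    nlinarith [mul_nonneg (mul_nonneg (mul_nonneg (mul_nonneg hc hβ.le) hμ'0.le) hx) ha.le]
  linarith

theorem stmt_14 (β K μ' c : ℝ)
    (hβ : 0 < β) (hK : 0 < K) (hμ'0 : 0 < μ') (hμ'1 : μ' ≤ 1) (hc : 0 ≤ c)
    (hβlb : β ≥ 2 / μ')
    (hμβ : ∀ k : ℕ, μ' * (β / ((k : ℝ) + K)) ≤ 1)
    (S : ℕ → ℝ) (hSnn : ∀ k, 0 ≤ S k)
    (hrec : ∀ k : ℕ,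
      S (k + 1) ≤ (1 - μ' * (β / ((k : ℝ) + K))) * S k + c * (β / ((k : ℝ) + K)) ^ 2) :
    ∀ k : ℕ, S k ≤ S 0 * (K / ((k : ℝ) + K)) + (2 * c / μ') * (β / ((k : ℝ) + K)) := by
  have h2 : 2 ≤ μ' * β := by
    rw [ge_iff_le, div_le_iff₀ hμ'0] at hβlb; linarith [hβlb]
  intro k
  induction k with
  | zero =>
    simp only [Nat.cast_zero, zero_add]
    have h0 : S 0 * (K / K) = S 0 := by rw [div_self hK.ne']; ring
    rw [h0]
    have : 0 ≤ (2 * c / μ') * (β / K) := by positivity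
    linarith
  | succ k ih =>
    have ha : (0:ℝ) < (k:ℝ) + K := by positivity
    have h1 : 0 ≤ 1 - μ' * (β / ((k:ℝ) + K)) := by linarith [hμβ k]
    have step := hrec k
    have mono : (1 - μ' * (β / ((k:ℝ) + K))) * S k ≤
        (1 - μ' * (β / ((k:ℝ) + K))) * (S 0 * (K / ((k:ℝ) + K)) + (2 * c / μ') * (β / ((k:ℝ) + K))) :=
      mul_le_mul_of_nonneg_left ih h1
    have keyh := key_step ((k:ℝ) + K) β K μ' c (S 0) ha hK hμ'0 hc (hSnn 0) hβ h2
    have hcast : ((k + 1 : ℕ) : ℝ) + K = ((k:ℝ) + K) + 1 := by push_cast; ring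
    rw [hcast]
    linarith
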